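/- For the Z-fanout simulation block: starting from state |d⃗, 0⃗, ..., 0⃗⟩ on n + n² qubits, applying fanout to copy d⃗ into each of n blocks, then in each block i applying the phase (-1)^(d_i c_{ii} Σ_{j≠i} d_j c_{ij}), then uncopying, yields the state (-1)^(Σ_i d_i c_{ii} Σ_{j≠i} d_j c_{ij}) |d⃗, 0⃗, ..., 0⃗⟩. In particular, choosing the Boolean parameters c_{ij} appropriately, this implements any product of Z-fanout gates with distinct control qubits acting on the data register d⃗. -/

import Mathlib

variable (n : ℕ)

/-- Basis states of the `n + n²` qubits: the data register `d⃗ ∈ {0,1}^n`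
together with the `n` ancilla blocks `B_1, …, B_n` of `n` qubits each. -/
def BState (n : ℕ) : Type := (Fin n → Bool) × (Fin n → Fin n → Bool)

instance : DecidableEq (BState n) := by unfold BState; infer_instance
instance : Fintype (BState n) := by unfold BState; infer_instance

/-- The computational basis vector indexed by `z`. -/
def basisVec {n : ℕ} (z : BState n) : BState n → ℂ :=
  fun w => if w = z then 1 else 0

/-- The copying step: fanout gates XOR the data register into each block, so
block qubit `b_{ij}` becomes `b_{ij} ⊕ d_j`.  (Applied to blocks initialized
to 0 this copies `d⃗` into each block; applied again it uncopies.) -/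
def copyFun {n : ℕ} (y : BState n) : BState n :=
  (y.1, fun i j => xor (y.2 i j) (y.1 j))

/-- The copy/uncopy step as a matrix. -/
def copyMat (n : ℕ) : Matrix (BState n) (BState n) ℂ :=
  fun x y => if x = copyFun y then 1 else 0

/-- The middle phase step, with Boolean parameters `c i j`: block `i`
contributes the phase `(-1)^(b_{ii} c_{ii} · Σ_{j ≠ i} b_{ij} c_{ij})`. -/
def phaseMat (n : ℕ) (c : Fin n → Fin n → Bool) : Matrix (BState n) (BState n) ℂ :=
  Matrix.diagonal fun z =>
    (-1 : ℂ) ^ ∑ i : Fin n,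
      if z.2 i i && c i i then
        ∑ j ∈ Finset.univ.erase i, (if z.2 i j && c i j then 1 else 0) else 0

/-- The whole simulation block: copy, phase, uncopy. -/
noncomputable def blockMat (n : ℕ) (c : Fin n → Fin n → Bool) : Matrix (BState n) (BState n) ℂ :=
  copyMat n * phaseMat n c * copyMat n

/-- All ancilla blocks set to 0. -/
def zeroBlocks (n : ℕ) : Fin n → Fin n → Bool := fun _ _ => false

/-- The choice of parameters encoding a layer of `Z`-fanout gates with
(distinct) controls `i ∈ A` and target sets `S i`. -/
def encParams {n : ℕ} (A : Finset (Fin n)) (S : Fin n → Finset (Fin n)) :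
    Fin n → Fin n → Bool :=
  fun i j => if i = j then decide (i ∈ A) else decide (i ∈ A ∧ j ∈ S i)


lemma copy_mulVec {n : ℕ} (z : BState n) :
    (copyMat n).mulVec (basisVec z) = basisVec (copyFun z) := by
  funext x
  simp [Matrix.mulVec, basisVec, copyMat, dotProduct, Finset.sum_ite_eq']

lemma diag_mulVec_basis {n : ℕ} (f : BState n → ℂ) (z : BState n) :
    (Matrix.diagonal f).mulVec (basisVec z) = f z • basisVec z := by
  funext x
  simp only [Matrix.mulVec_diagonal, basisVec, Pi.smul_apply, smul_eq_mul]
  by_cases h : x = z <;> simp [h]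

lemma copy_zero {n : ℕ} (d : Fin n → Bool) :
    copyFun (d, zeroBlocks n) = (d, fun _ j => d j) := by
  simp [copyFun, zeroBlocks]; rfl

lemma copy_full {n : ℕ} (d : Fin n → Bool) :
    copyFun ((d, fun _ j => d j) : BState n) = (d, zeroBlocks n) := by
  simp only [copyFun, Bool.xor_self]; rfl

theorem zsim_part1 (n : ℕ) (c : Fin n → Fin n → Bool) (d : Fin n → Bool) :
      (blockMat n c).mulVec (basisVec (d, zeroBlocks n)) =
        ((-1 : ℂ) ^ ∑ i : Fin n,
            if d i && c i i then
              ∑ j ∈ Finset.univ.erase i, (if d j && c i j then 1 else 0) else 0) •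
          basisVec (d, zeroBlocks n) := by
  rw [blockMat, ← Matrix.mulVec_mulVec, ← Matrix.mulVec_mulVec, copy_mulVec ((d, zeroBlocks n) : BState n), copy_zero,
    phaseMat, diag_mulVec_basis (z := ((d, fun _ j => d j) : BState n)), Matrix.mulVec_smul,
    copy_mulVec ((d, fun _ j => d j) : BState n), copy_full]

theorem zsim_part2scalar (n : ℕ) (A : Finset (Fin n)) (S : Fin n → Finset (Fin n))
    (hS : ∀ i, i ∉ S i) (d : Fin n → Bool) :
    ((-1 : ℂ) ^ ∑ i : Fin n,
        if d i && encParams A S i i then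
          ∑ j ∈ Finset.univ.erase i, (if d j && encParams A S i j then 1 else 0) else 0)
      = ∏ i ∈ A, if d i then (-1 : ℂ) ^ ((S i).filter fun j => d j = true).card else 1 := by
  have key : ∀ i ∈ A, d i = true →
      (∑ j ∈ Finset.univ.erase i, (if d j && encParams A S i j then 1 else 0))
        = ((S i).filter fun j => d j = true).card := by
    intro i hi _
    calc ∑ j ∈ Finset.univ.erase i, (if d j && encParams A S i j then 1 else 0)
        = ∑ j ∈ Finset.univ.erase i, (if d j && decide (j ∈ S i) then 1 else 0) := by
          apply Finset.sum_congr rfl; intro j hj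
          have hji : i ≠ j := Ne.symm (Finset.ne_of_mem_erase hj)
          simp [encParams, hji, hi]
      _ = ∑ j : Fin n, (if d j && decide (j ∈ S i) then 1 else 0) := by
          apply Finset.sum_erase; simp [hS i]
      _ = ∑ j ∈ S i, (if d j then 1 else 0) := by
          rw [← Finset.sum_subset (Finset.subset_univ (S i))]
          · apply Finset.sum_congr rfl; intro j hj; simp [hj]
          · intro j _ hj; simp [hj]
      _ = ((S i).filter fun j => d j = true).card := by
          rw [Finset.card_filter]
  calc ((-1 : ℂ) ^ ∑ i : Fin n,
        if d i && encParams A S i i then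
          ∑ j ∈ Finset.univ.erase i, (if d j && encParams A S i j then 1 else 0) else 0)
      = ∏ i : Fin n, (-1 : ℂ) ^
          (if d i && encParams A S i i then
            ∑ j ∈ Finset.univ.erase i, (if d j && encParams A S i j then 1 else 0) else 0) :=
        (Finset.prod_pow_eq_pow_sum _ _ _).symm
    _ = ∏ i ∈ A, (-1 : ℂ) ^
          (if d i && encParams A S i i then
            ∑ j ∈ Finset.univ.erase i, (if d j && encParams A S i j then 1 else 0) else 0) := by
        refine (Finset.prod_subset (Finset.subset_univ A) ?_).symm
        intro i _ hi
        simp [encParams, hi]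
    _ = ∏ i ∈ A, (if d i then (-1 : ℂ) ^ ((S i).filter fun j => d j = true).card else 1) := by
        apply Finset.prod_congr rfl
        intro i hi
        by_cases hd : d i
        · rw [key i hi hd]; simp [hd, encParams, hi]
        · simp [hd]

/-- starting from `|d⃗, 0⃗, …, 0⃗⟩`, the copy–phase–uncopy block
yields `(-1)^(Σ_i d_i c_{ii} Σ_{j≠i} d_j c_{ij}) |d⃗, 0⃗, …, 0⃗⟩`; in
particular, choosing the parameters `c` from a layer of `Z`-fanout gates with
pairwise distinct controls `i ∈ A` and targets `S i` (with `i ∉ S i`), it applies to the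
data register exactly the product of the phases `(-1)^(d_i Σ_{j ∈ S i} d_j)`
of those `Z`-fanout gates. -/
theorem zfanout_simulation_block (n : ℕ) :
    (∀ (c : Fin n → Fin n → Bool) (d : Fin n → Bool),
      (blockMat n c).mulVec (basisVec (d, zeroBlocks n)) =
        ((-1 : ℂ) ^ ∑ i : Fin n,
            if d i && c i i then
              ∑ j ∈ Finset.univ.erase i, (if d j && c i j then 1 else 0) else 0) •
          basisVec (d, zeroBlocks n)) ∧
    (∀ (A : Finset (Fin n)) (S : Fin n → Finset (Fin n)),
      (∀ i, i ∉ S i) →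
      ∀ d : Fin n → Bool,
        (blockMat n (encParams A S)).mulVec (basisVec (d, zeroBlocks n)) =
          (∏ i ∈ A, if d i then
              (-1 : ℂ) ^ ((S i).filter fun j => d j = true).card else 1) •
            basisVec (d, zeroBlocks n)) := by
  refine ⟨zsim_part1 n, ?_⟩
  intro A S hS d
  rw [zsim_part1 n (encParams A S) d, zsim_part2scalar n A S hS d]
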